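/- A continuation of the logarithm along a path exists iff a lift to the logarithmic manifold exists: given a path γ : [a,b] → ℍ \ {0}, there exists a continuous path Γ : [a,b] → ℍ × Im(ℍ) with Γ(t) ∈ 𝓔⁺ and pr₁ ∘ Γ = γ if and only if there exists a continuous path γ̃ : [a,b] → ℍ with exp ∘ γ̃ = γ. -/

import Mathlib

open Quaternion Set

/-- The quaternionic exponential, given by the power series `∑ qᵏ/k!`. -/
noncomputable def qexp (q : ℍ[ℝ]) : ℍ[ℝ] := NormedSpace.exp q

/-- The slice argument `arg_ℐ(q) ∈ (0,π)` of a nonreal quaternion. -/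
noncomputable def sliceArg (q : ℍ[ℝ]) : ℝ := Real.arccos (q.re / ‖q‖)

/-- The imaginary unit `ℐ(q)` of a nonreal quaternion. -/
noncomputable def unitIm (q : ℍ[ℝ]) : ℍ[ℝ] := ‖q.im‖⁻¹ • q.im

/- `Arg(q) = ℐ(q)·arg_ℐ(q)` for nonreal `q`, and `0` on the reals. -/
open scoped Classical in
noncomputable def qArg (q : ℍ[ℝ]) : ℍ[ℝ] :=
  if q.im = 0 then 0 else sliceArg q • unitIm q

/-- The `2k`-th branch of the quaternionic argument:
`Arg_{2k}(q) = ℐ(q)·(arg_ℐ(q) + 2kπ)`. -/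
noncomputable def qArg2k (k : ℤ) (q : ℍ[ℝ]) : ℍ[ℝ] :=
  (sliceArg q + 2 * (k : ℝ) * Real.pi) • unitIm q

/-- The map `E(x + Iy) = (exp(x+Iy), Iy)`. -/
noncomputable def Emap (z : ℍ[ℝ]) : ℍ[ℝ] × ℍ[ℝ] := (qexp z, z.im)

/-- The logarithmic manifold `𝓔⁺`, the image of `E`. -/
def LogManifold : Set (ℍ[ℝ] × ℍ[ℝ]) := Set.range Emap

lemma norm_qexp (q : ℍ[ℝ]) : ‖qexp q‖ = Real.exp q.re := by
  rw [qexp, Quaternion.norm_exp, ← Real.exp_eq_exp_ℝ, Real.norm_eq_abs,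
    abs_of_pos (Real.exp_pos _)]

theorem lift_iff_continuation (a b : ℝ) (hab : a ≤ b) (γ : ℝ → ℍ[ℝ])
    (hγ : ContinuousOn γ (Icc a b)) (hne : ∀ t ∈ Icc a b, γ t ≠ 0) :
    (∃ Γ : ℝ → ℍ[ℝ] × ℍ[ℝ], ContinuousOn Γ (Icc a b) ∧
        ∀ t ∈ Icc a b, Γ t ∈ LogManifold ∧ (Γ t).1 = γ t) ↔
      (∃ g : ℝ → ℍ[ℝ], ContinuousOn g (Icc a b) ∧ ∀ t ∈ Icc a b, qexp (g t) = γ t) := by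
  constructor
  · rintro ⟨Γ, hΓc, hΓ⟩
    refine ⟨fun t => ((Real.log ‖γ t‖ : ℝ) : ℍ[ℝ]) + (Γ t).2, ?_, ?_⟩
    · apply ContinuousOn.add
      · exact (continuous_coe.comp_continuousOn
          ((hγ.norm).log (fun t ht => norm_ne_zero_iff.2 (hne t ht))))
      · exact continuous_snd.comp_continuousOn hΓc
    · intro t ht
      obtain ⟨⟨z, hz⟩, h1⟩ := hΓ t ht
      have hz1 : qexp z = γ t := by rw [← h1, ← hz]; rfl
      have hz2 : z.im = (Γ t).2 := by rw [← hz]; rfl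
      have hre : Real.log ‖γ t‖ = z.re := by
        rw [← hz1, norm_qexp, Real.log_exp]
      show qexp (((Real.log ‖γ t‖ : ℝ) : ℍ[ℝ]) + (Γ t).2) = γ t
      rw [hre, ← hz2, Quaternion.re_add_im, hz1]
  · rintro ⟨g, hgc, hg⟩
    refine ⟨fun t => Emap (g t), ?_, fun t ht => ⟨⟨g t, rfl⟩, hg t ht⟩⟩
    have : Continuous Emap := by
      refine continuous_prodMk.2 ⟨?_, ?_⟩
      · exact continuous_iff_continuousAt.2 fun x => (NormedSpace.exp_analytic (𝕂 := ℝ) (x : ℍ[ℝ])).continuousAt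
      · exact Quaternion.continuous_im
    exact this.comp_continuousOn hgc
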